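/- An irreducible stochastic matrix κ over a finite nonempty state space S has at most one invariant distribution: if π and π′ are both invariant distributions of κ, then π = π′. -/

import Mathlib

/-- An irreducible stochastic matrix has at most one invariant distribution. -/
theorem irreducible_invariant_distribution_unique
    {S : Type*} [Fintype S] [DecidableEq S] [Nonempty S]
    (κ : Matrix S S ℝ)
    (hκ_nonneg : ∀ z s, 0 ≤ κ z s)
    (hκ_rowsum : ∀ z, ∑ s, κ z s = 1)
    (hirred : ∀ z s, ∃ n > 0, 0 < (κ ^ n) z s)
    (π π' : S → ℝ)
    (hπ_nonneg : ∀ s, 0 ≤ π s) (hπ_sum : ∑ s, π s = 1)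
    (hπ_inv : ∀ s, ∑ z, π z * κ z s = π s)
    (hπ'_nonneg : ∀ s, 0 ≤ π' s) (hπ'_sum : ∑ s, π' s = 1)
    (hπ'_inv : ∀ s, ∑ z, π' z * κ z s = π' s) :
    π = π' := by
  classical
  -- entries of powers are nonnegative
  have pow_nonneg : ∀ n z s, 0 ≤ (κ ^ n) z s := by
    intro n
    induction n with
    | zero => intro z s; simp [Matrix.one_apply]; split <;> norm_num
    | succ n ih =>
      intro z s
      rw [pow_succ, Matrix.mul_apply]
      exact Finset.sum_nonneg fun w _ => mul_nonneg (ih z w) (hκ_nonneg w s)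
  -- invariance propagates to powers
  have pow_inv : ∀ (v : S → ℝ), (∀ s, ∑ z, v z * κ z s = v s) →
      ∀ n s, ∑ z, v z * (κ ^ n) z s = v s := by
    intro v hv n
    induction n with
    | zero => intro s; simp [Matrix.one_apply]
    | succ n ih =>
      intro s
      rw [pow_succ]
      simp only [Matrix.mul_apply, Finset.mul_sum]
      rw [Finset.sum_comm]
      have : ∀ w, ∑ z, v z * ((κ ^ n) z w * κ w s)
          = (∑ z, v z * (κ ^ n) z w) * κ w s := by
        intro w
        rw [Finset.sum_mul]
        exact Finset.sum_congr rfl fun z _ => by ring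
      simp only [this, ih]
      exact hv s
  -- invariant distributions are strictly positive
  have pos : ∀ (v : S → ℝ), (∀ s, 0 ≤ v s) → (∑ s, v s = 1) →
      (∀ s, ∑ z, v z * κ z s = v s) → ∀ s, 0 < v s := by
    intro v hv0 hv1 hvinv s
    have hex : ∃ z0, 0 < v z0 := by
      by_contra h
      push_neg at h
      have : ∑ z, v z ≤ 0 := Finset.sum_nonpos fun z _ => h z
      linarith
    obtain ⟨z0, hz0⟩ := hex
    obtain ⟨n, hn, hpos⟩ := hirred z0 s
    have hle : v z0 * (κ ^ n) z0 s ≤ ∑ z, v z * (κ ^ n) z s :=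
      Finset.single_le_sum (fun z _ => mul_nonneg (hv0 z) (pow_nonneg n z s))
        (Finset.mem_univ z0)
    rw [pow_inv v hvinv n s] at hle
    exact lt_of_lt_of_le (mul_pos hz0 hpos) hle
  have hπ'pos : ∀ s, 0 < π' s := pos π' hπ'_nonneg hπ'_sum hπ'_inv
  -- minimize the ratio
  obtain ⟨s0, -, hs0⟩ := Finset.exists_min_image Finset.univ
    (fun s => π s / π' s) Finset.univ_nonempty
  set c : ℝ := π s0 / π' s0 with hc
  set σ : S → ℝ := fun s => π s - c * π' s with hσ
  have hσ0 : ∀ s, 0 ≤ σ s := by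
    intro s
    have := hs0 s (Finset.mem_univ s)
    have h2 : c * π' s ≤ π s := (le_div_iff₀ (hπ'pos s)).mp this
    simpa [hσ] using sub_nonneg.mpr h2
  have hσs0 : σ s0 = 0 := by
    have : π' s0 ≠ 0 := ne_of_gt (hπ'pos s0)
    simp only [hσ, hc]
    field_simp
    ring
  have hσinv : ∀ s, ∑ z, σ z * κ z s = σ s := by
    intro s
    simp only [hσ, sub_mul, Finset.sum_sub_distrib, mul_assoc, ← Finset.mul_sum,
      hπ_inv s, hπ'_inv s]
  have hσzero : ∀ z, σ z = 0 := by
    intro z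
    obtain ⟨n, hn, hpos⟩ := hirred z s0
    have hle : σ z * (κ ^ n) z s0 ≤ ∑ w, σ w * (κ ^ n) w s0 :=
      Finset.single_le_sum (fun w _ => mul_nonneg (hσ0 w) (pow_nonneg n w s0))
        (Finset.mem_univ z)
    rw [pow_inv σ hσinv n s0, hσs0] at hle
    have := mul_nonneg (hσ0 z) (le_of_lt hpos)
    have hmul : σ z * (κ ^ n) z s0 = 0 := le_antisymm hle this
    rcases mul_eq_zero.mp hmul with h | h
    · exact h
    · exact absurd h (ne_of_gt hpos)
  have heq : ∀ z, π z = c * π' z := by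
    intro z
    have := hσzero z
    simp only [hσ] at this
    linarith
  have hc1 : c = 1 := by
    have : ∑ s, π s = ∑ s, c * π' s := Finset.sum_congr rfl fun s _ => heq s
    rw [hπ_sum, ← Finset.mul_sum, hπ'_sum] at this
    linarith
  funext s
  rw [heq s, hc1, one_mul]
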